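/- arXiv:1802.10107 — 2 statements merged into one kernel-verified Lean document; each statement's English description precedes it below -/
import Mathlib

section
/- For each j∈I the coordinate projection Proj_I is mutation-linear: if I is a subset of the indices of B and Σ c_i v_i is a B-coherent linear relation in ℝ^n, then Σ c_i Proj_I(v_i) is a B_I-coherent linear relation in ℝ^I. -/
open scoped Classical

/-- A skew-symmetrizable integer matrix (an exchange matrix). -/
def SkewSymmetrizable {ι : Type*} (B : Matrix ι ι ℤ) : Prop :=
  ∃ d : ι → ℤ, (∀ i, 0 < d i) ∧ ∀ i j, d i * B i j = -(d j * B j i)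

/-- Matrix mutation at index `k`. -/
def mutate {ι : Type*} [DecidableEq ι] (B : Matrix ι ι ℤ) (k : ι) : Matrix ι ι ℤ :=
  Matrix.of fun i j =>
    if i = k ∨ j = k then -B i j
    else B i j + Int.sign (B k j) * max 0 (B i k * B k j)

/-- Iterated matrix mutation along a sequence (the head of the list is
applied last). -/
def mutateSeq {ι : Type*} [DecidableEq ι] (B : Matrix ι ι ℤ) :
    List ι → Matrix ι ι ℤ
  | [] => B
  | k :: ks => mutate (mutateSeq B ks) k

/-- The mutation map `η_k^B`. -/
noncomputable def eta {ι : Type*} [DecidableEq ι] (B : Matrix ι ι ℤ) (k : ι)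
    (a : ι → ℝ) : ι → ℝ :=
  fun j =>
    if j = k then -a k
    else if 0 ≤ a k ∧ 0 ≤ B k j then a j + a k * (B k j : ℝ)
    else if a k ≤ 0 ∧ B k j ≤ 0 then a j - a k * (B k j : ℝ)
    else a j

/-- The composed mutation map for a sequence of indices. -/
noncomputable def etaSeq {ι : Type*} [DecidableEq ι] (B : Matrix ι ι ℤ) :
    List ι → (ι → ℝ) → (ι → ℝ)
  | [] => id
  | k :: ks => fun a => eta (mutateSeq B ks) k (etaSeq B ks a)

/-- A `B`-coherent linear relation `Σ_{i ∈ S} c_i v_i`. -/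
def IsBCoherent {ι : Type*} [DecidableEq ι] {σ : Type} (B : Matrix ι ι ℤ)
    (S : Finset σ) (c : σ → ℝ) (v : σ → ι → ℝ) : Prop :=
  ∀ ks : List ι,
    (∑ i ∈ S, c i • etaSeq B ks (v i)) = (0 : ι → ℝ) ∧
    (∑ i ∈ S, c i • (fun j => min (etaSeq B ks (v i) j) 0 : ι → ℝ)) = (0 : ι → ℝ)

section Aux
variable {n : ℕ} (B : Matrix (Fin n) (Fin n) ℤ) (I : Set (Fin n))

lemma mutate_submatrix (k : I) :
    mutate (B.submatrix (Subtype.val : I → Fin n) Subtype.val) k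
      = (mutate B k.val).submatrix Subtype.val Subtype.val := by
  ext i j
  simp only [mutate, Matrix.of_apply, Matrix.submatrix_apply]
  exact if_congr (or_congr Subtype.ext_iff Subtype.ext_iff) rfl rfl

lemma mutateSeq_submatrix (ks : List I) :
    mutateSeq (B.submatrix (Subtype.val : I → Fin n) Subtype.val) ks
      = (mutateSeq B (ks.map Subtype.val)).submatrix Subtype.val Subtype.val := by
  induction ks with
  | nil => rfl
  | cons k ks ih =>
      simp only [mutateSeq, List.map_cons, ih, mutate_submatrix]

lemma eta_submatrix (B' : Matrix (Fin n) (Fin n) ℤ) (k : I) (a : Fin n → ℝ) :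
    eta (B'.submatrix (Subtype.val : I → Fin n) Subtype.val) k (fun i : I => a i.val)
      = fun j : I => eta B' k.val a j.val := by
  funext j
  simp only [eta, Matrix.submatrix_apply]
  exact if_congr Subtype.ext_iff rfl rfl

lemma etaSeq_submatrix (ks : List I) (a : Fin n → ℝ) :
    etaSeq (B.submatrix (Subtype.val : I → Fin n) Subtype.val) ks (fun i : I => a i.val)
      = fun j : I => etaSeq B (ks.map Subtype.val) a j.val := by
  induction ks with
  | nil => rfl
  | cons k ks ih =>
      simp only [etaSeq, List.map_cons, ih, mutateSeq_submatrix]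
      exact eta_submatrix _ _ _ _

end Aux

/-- The coordinate projection `Proj_I` is mutation-linear: it sends every
`B`-coherent linear relation to a `B_I`-coherent linear relation, where `B_I`
is the principal submatrix of `B` on the index set `I`. -/
theorem proj_mutationLinear {n : ℕ} (B : Matrix (Fin n) (Fin n) ℤ)
    (hB : SkewSymmetrizable B) (I : Set (Fin n)) {σ : Type}
    (S : Finset σ) (c : σ → ℝ) (v : σ → Fin n → ℝ)
    (h : IsBCoherent B S c v) :
    IsBCoherent (B.submatrix (Subtype.val : I → Fin n) Subtype.val) S c
      (fun s => fun i : I => v s i.val) := by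
  intro ks
  obtain ⟨h1, h2⟩ := h (ks.map Subtype.val)
  constructor
  · funext j
    have := congrFun h1 j.val
    simpa [etaSeq_submatrix, Finset.sum_apply] using this
  · funext j
    have := congrFun h2 j.val
    simpa [etaSeq_submatrix, Finset.sum_apply] using this
end

section
/- For 2×2 exchange matrices B = [[0,a],[b,0]] and B' = [[0,c],[d,0]] of wild type (ab ≤ -4 and cd ≤ -4, with a,c > 0 and b,d < 0), if the two irrational limiting slopes agree, i.e. a(√(-ab)+√(-ab-4))/(2√(-ab)) = c(√(-cd)+√(-cd-4))/(2√(-cd)) and 2√(-ab)/(b(√(-ab)+√(-ab-4))) = 2√(-cd)/(d(√(-cd)+√(-cd-4))), and ab < -4, then a = c and b = d. -/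
open Real

lemma ident (x y sm s4 : ℝ) (hsm : 0 < sm) (hs4 : 0 ≤ s4) (hy : y < 0)
    (e1 : sm * sm = -(x*y)) (e2 : s4 * s4 = -(x*y) - 4) :
    x*(sm+s4)/(2*sm) = x/2 - sm*s4/(2*y) ∧
    2*sm/(y*(sm+s4)) = -(x/2) - sm*s4/(2*y) := by
  have hsum : 0 < sm + s4 := by linarith
  have hy0 : y ≠ 0 := hy.ne
  have hne : y * (sm + s4) ≠ 0 := by
    intro h
    rcases mul_eq_zero.mp h with h' | h'
    · exact hy0 h'
    · exact hsum.ne' h'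
  constructor
  · field_simp
    nlinarith [e1, e2, sq_nonneg sm]
  · rw [div_eq_iff hne]
    have hyy : sm*s4/(2*y) * y = sm*s4/2 := by
      rw [div_mul_eq_mul_div, mul_div_mul_right _ _ hy0]
    linear_combination (sm+s4)*hyy + (s4/2)*e1 + (sm/2)*e2

/-- For wild-type 2×2 exchange matrices `[[0,a],[b,0]]` and `[[0,c],[d,0]]`
(with `a,c > 0`, `b,d < 0`, `ab ≤ -4`, `cd ≤ -4`, and `ab < -4`), if the two
irrational limiting slopes agree then `a = c` and `b = d`. -/
theorem wild_slopes_determine (a b c d : ℤ)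
    (ha : 0 < a) (hb : b < 0) (hc : 0 < c) (hd : d < 0)
    (hab : a * b ≤ -4) (hcd : c * d ≤ -4) (hab' : a * b < -4)
    (h1 : (a : ℝ) * (Real.sqrt (-((a : ℝ) * b)) + Real.sqrt (-((a : ℝ) * b) - 4)) /
            (2 * Real.sqrt (-((a : ℝ) * b)))
        = (c : ℝ) * (Real.sqrt (-((c : ℝ) * d)) + Real.sqrt (-((c : ℝ) * d) - 4)) /
            (2 * Real.sqrt (-((c : ℝ) * d))))
    (h2 : 2 * Real.sqrt (-((a : ℝ) * b)) /
            ((b : ℝ) * (Real.sqrt (-((a : ℝ) * b)) + Real.sqrt (-((a : ℝ) * b) - 4)))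
        = 2 * Real.sqrt (-((c : ℝ) * d)) /
            ((d : ℝ) * (Real.sqrt (-((c : ℝ) * d)) + Real.sqrt (-((c : ℝ) * d) - 4)))) :
    a = c ∧ b = d := by
  have habR : ((a:ℝ) * b) ≤ -4 := by exact_mod_cast (show ((a*b:ℤ):ℝ) ≤ -4 by exact_mod_cast hab)
  have hcdR : ((c:ℝ) * d) ≤ -4 := by exact_mod_cast (show ((c*d:ℤ):ℝ) ≤ -4 by exact_mod_cast hcd)
  have hbR : (b:ℝ) < 0 := by exact_mod_cast hb
  have hdR : (d:ℝ) < 0 := by exact_mod_cast hd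
  have e1a : Real.sqrt (-((a:ℝ)*b)) * Real.sqrt (-((a:ℝ)*b)) = -((a:ℝ)*b) :=
    Real.mul_self_sqrt (by linarith)
  have e2a : Real.sqrt (-((a:ℝ)*b) - 4) * Real.sqrt (-((a:ℝ)*b) - 4) = -((a:ℝ)*b) - 4 :=
    Real.mul_self_sqrt (by linarith)
  have e1c : Real.sqrt (-((c:ℝ)*d)) * Real.sqrt (-((c:ℝ)*d)) = -((c:ℝ)*d) :=
    Real.mul_self_sqrt (by linarith)
  have e2c : Real.sqrt (-((c:ℝ)*d) - 4) * Real.sqrt (-((c:ℝ)*d) - 4) = -((c:ℝ)*d) - 4 :=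
    Real.mul_self_sqrt (by linarith)
  obtain ⟨ia1, ia2⟩ := ident (a:ℝ) (b:ℝ) _ _
    (Real.sqrt_pos.mpr (by linarith)) (Real.sqrt_nonneg _) hbR e1a e2a
  obtain ⟨ic1, ic2⟩ := ident (c:ℝ) (d:ℝ) _ _
    (Real.sqrt_pos.mpr (by linarith)) (Real.sqrt_nonneg _) hdR e1c e2c
  rw [ia1, ic1] at h1
  rw [ia2, ic2] at h2
  have hacR : (a:ℝ) = c := by linarith
  have hac : a = c := by exact_mod_cast hacR
  have hPQ : Real.sqrt (-((a:ℝ)*b)) * Real.sqrt (-((a:ℝ)*b) - 4) / (2*(b:ℝ))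
      = Real.sqrt (-((c:ℝ)*d)) * Real.sqrt (-((c:ℝ)*d) - 4) / (2*(d:ℝ)) := by linarith
  rw [div_eq_div_iff (mul_ne_zero two_ne_zero hbR.ne) (mul_ne_zero two_ne_zero hdR.ne)] at hPQ
  have hsq := congrArg (fun z : ℝ => z * z) hPQ
  have key : (-((a:ℝ)*b))*(-((a:ℝ)*b)-4)*((d:ℝ)*d) = (-((c:ℝ)*d))*(-((c:ℝ)*d)-4)*((b:ℝ)*b) := by
    linear_combination (1/4 : ℝ) * hsq
      - (-((a:ℝ)*b)-4)*((d:ℝ)*d)*e1a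
      - (Real.sqrt (-((a:ℝ)*b)) * Real.sqrt (-((a:ℝ)*b)))*((d:ℝ)*d)*e2a
      + (-((c:ℝ)*d)-4)*((b:ℝ)*b)*e1c
      + (Real.sqrt (-((c:ℝ)*d)) * Real.sqrt (-((c:ℝ)*d)))*((b:ℝ)*b)*e2c
  have keyZ : (-(a*b))*(-(a*b)-4)*(d*d) = (-(c*d))*(-(c*d)-4)*(b*b) := by exact_mod_cast key
  subst hac
  refine ⟨rfl, ?_⟩
  have h0 : 4*(a*b*d*(d-b)) = 0 := by linear_combination keyZ
  have h1' : a*b*d*(d-b) = 0 := by linarith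
  have habd : 0 < a*b*d := by
    have : a*b < 0 := by nlinarith
    nlinarith
  rcases mul_eq_zero.mp h1' with h | h
  · exact absurd h habd.ne'
  · omega
end
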